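/- arXiv:1509.08285 — 3 statements merged into one kernel-verified Lean document; each statement's English description precedes it below -/
import Mathlib

section
/- Let T be a terrain and let g ∈ T be a point with x(g) < x(v_i) that sees some point p ∈ int(e_i). Then g sees every point of the segment [p, v_{i+1}]; in particular g sees v_{i+1}, and V(g) ∩ e_i is a single segment containing v_{i+1}. Symmetrically, if x(g) > x(v_{i+1}) and g sees some point p ∈ int(e_i), then g sees every point of the segment [v_i, p]; in particular g sees v_i, and V(g) ∩ e_i is a single segment containing v_i. -/
open Set

/-- A terrain: `n ≥ 2` vertices `v 0, …, v (n-1)` in `ℝ²` with strictly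
increasing `x`-coordinates. -/
structure Terrain where
  n : ℕ
  hn : 2 ≤ n
  v : ℕ → ℝ × ℝ
  mono : ∀ i j : ℕ, i < j → j < n → (v i).1 < (v j).1

namespace Terrain

/-- The edge `e_i = [v_i, v_{i+1}]` (meaningful for `i + 1 < n`). -/
def edge (T : Terrain) (i : ℕ) : Set (ℝ × ℝ) := segment ℝ (T.v i) (T.v (i + 1))

/-- The terrain as a subset of `ℝ²`: the union of its edges. -/
def carrier (T : Terrain) : Set (ℝ × ℝ) := ⋃ i ∈ Finset.range (T.n - 1), T.edge i

/-- The interior of the edge `e_i`: the edge minus its two endpoints. -/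
def intEdge (T : Terrain) (i : ℕ) : Set (ℝ × ℝ) := T.edge i \ {T.v i, T.v (i + 1)}

/-- `p` sees `q` iff every point of the segment `[p, q]` is nowhere strictly below
the terrain, i.e. every point of the segment lies on or above the terrain point
with the same `x`-coordinate. -/
def sees (T : Terrain) (p q : ℝ × ℝ) : Prop :=
  ∀ z ∈ segment ℝ p q, ∀ t ∈ T.carrier, t.1 = z.1 → t.2 ≤ z.2

/-- The visibility region `V(p) = {q ∈ T : p sees q}`. -/
def vis (T : Terrain) (p : ℝ × ℝ) : Set (ℝ × ℝ) := {q ∈ T.carrier | T.sees p q}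

/-- `V(C) = ⋃_{g ∈ C} V(g)`. -/
def visSet (T : Terrain) (C : Set (ℝ × ℝ)) : Set (ℝ × ℝ) := ⋃ g ∈ C, T.vis g

/-- `C ⊆ T` is a cover of the terrain iff `V(C) = T`. -/
def IsCover (T : Terrain) (C : Set (ℝ × ℝ)) : Prop :=
  C ⊆ T.carrier ∧ T.visSet C = T.carrier

/-- The vertex set `V = {v_1, …, v_n}`. -/
def vertexSet (T : Terrain) : Set (ℝ × ℝ) := {p | ∃ i < T.n, p = T.v i}

/-- Edge `e_i` is critical w.r.t. `g ∈ C`: `C \ {g}` covers some part of,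
but not all of, `int(e_i)`. -/
def IsCriticalWrt (T : Terrain) (C : Set (ℝ × ℝ)) (g : ℝ × ℝ) (i : ℕ) : Prop :=
  (T.visSet (C \ {g}) ∩ T.intEdge i).Nonempty ∧ ¬ T.intEdge i ⊆ T.visSet (C \ {g})

/-- `g` is a left-guard of `e_i`: `x(g) < x(v_i)` and `e_i` is critical w.r.t. `g`. -/
def IsLeftGuard (T : Terrain) (C : Set (ℝ × ℝ)) (g : ℝ × ℝ) (i : ℕ) : Prop :=
  g.1 < (T.v i).1 ∧ T.IsCriticalWrt C g i

/-- `g` is a right-guard of `e_i`: `x(v_{i+1}) < x(g)` and `e_i` is critical w.r.t. `g`. -/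
def IsRightGuard (T : Terrain) (C : Set (ℝ × ℝ)) (g : ℝ × ℝ) (i : ℕ) : Prop :=
  (T.v (i + 1)).1 < g.1 ∧ T.IsCriticalWrt C g i

/-- `q` is extremal in `V(p)`: `q ∈ V(p)` and `q` has maximal or minimal
`x`-coordinate within its connected component of `V(p)`. -/
def Extremal (T : Terrain) (p q : ℝ × ℝ) : Prop :=
  q ∈ T.vis p ∧
    ((∀ r ∈ connectedComponentIn (T.vis p) q, r.1 ≤ q.1) ∨
     (∀ r ∈ connectedComponentIn (T.vis p) q, q.1 ≤ r.1))

/-- The guard candidate set `U`: all vertices together with the extremal points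
of the vertices' visibility regions. -/
def Uset (T : Terrain) : Set (ℝ × ℝ) :=
  T.vertexSet ∪ ⋃ i ∈ Finset.range T.n, {q | T.Extremal (T.v i) q}

/-- `OPT(G, W)`: the minimum cardinality of a finite `C ⊆ G` with `W ⊆ V(C)`. -/
noncomputable def OPT (T : Terrain) (G W : Set (ℝ × ℝ)) : ℕ :=
  sInf {k | ∃ C : Finset (ℝ × ℝ), ↑C ⊆ G ∧ W ⊆ T.visSet ↑C ∧ C.card = k}

end Terrain

namespace TerrainAux

open Terrain

noncomputable def slp (a b : ℝ × ℝ) : ℝ := (b.2 - a.2) / (b.1 - a.1)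

lemma slope_spec {a b : ℝ × ℝ} (h : a.1 < b.1) : b.2 = a.2 + (b.1 - a.1) * slp a b := by
  have hne : b.1 - a.1 ≠ 0 := by linarith
  rw [slp, mul_comm, div_mul_cancel₀ _ hne]; ring

lemma seg_param {a b z : ℝ × ℝ} (hab : a.1 < b.1) (hz : z ∈ segment ℝ a b) :
    a.1 ≤ z.1 ∧ z.1 ≤ b.1 ∧ z.2 = a.2 + (z.1 - a.1) * slp a b := by
  rcases hz with ⟨α, β, hα, hβ, hαβ, rfl⟩
  have h1 : (α • a + β • b).1 = α * a.1 + β * b.1 := by simp [Prod.fst_add]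
  have h2 : (α • a + β • b).2 = α * a.2 + β * b.2 := by simp [Prod.snd_add]
  rw [h1, h2]
  have hne : b.1 - a.1 ≠ 0 := by linarith
  have hb : β = 1 - α := by linarith
  subst hb
  have hα1 : α ≤ 1 := by linarith
  refine ⟨by nlinarith [mul_nonneg (sub_nonneg.2 hα1) (by linarith : (0:ℝ) ≤ b.1 - a.1)],
    by nlinarith [mul_nonneg hα (by linarith : (0:ℝ) ≤ b.1 - a.1)], ?_⟩
  have key : (α * a.1 + (1 - α) * b.1 - a.1) * slp a b = (1 - α) * (b.2 - a.2) := by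
    rw [slp]; field_simp; ring
  linarith [key]

lemma mem_seg_of_x {a b : ℝ × ℝ} (hab : a.1 < b.1) {x : ℝ} (h1 : a.1 ≤ x) (h2 : x ≤ b.1) :
    (x, a.2 + (x - a.1) * slp a b) ∈ segment ℝ a b := by
  have hne : b.1 - a.1 ≠ 0 := by linarith
  refine ⟨(b.1 - x)/(b.1 - a.1), (x - a.1)/(b.1 - a.1), ?_, ?_, ?_, ?_⟩
  · apply div_nonneg <;> linarith
  · apply div_nonneg <;> linarith
  · field_simp; ring
  · apply Prod.ext
    · simp only [Prod.fst_add, Prod.smul_fst, smul_eq_mul]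
      field_simp; ring
    · simp only [Prod.snd_add, Prod.smul_snd, smul_eq_mul, slp]
      field_simp; ring


variable {T : Terrain}

lemma vmono {i j : ℕ} (hij : i < j) (hj : j < T.n) : (T.v i).1 < (T.v j).1 :=
  T.mono i j hij hj

lemma edge_subset_carrier {i : ℕ} (hi : i + 1 < T.n) : T.edge i ⊆ T.carrier := by
  intro z hz
  have : i ∈ Finset.range (T.n - 1) := by simp; omega
  exact Set.mem_biUnion this hz

lemma edge_param {i : ℕ} (hi : i + 1 < T.n) {z : ℝ × ℝ} (hz : z ∈ T.edge i) :
    (T.v i).1 ≤ z.1 ∧ z.1 ≤ (T.v (i+1)).1 ∧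
      z.2 = (T.v i).2 + (z.1 - (T.v i).1) * slp (T.v i) (T.v (i+1)) :=
  seg_param (vmono (Nat.lt_succ_self i) hi) hz

/-- The terrain is a graph: any carrier point with abscissa in the range of edge `i`
lies on the line of edge `i`. -/
lemma carrier_y {i : ℕ} (hi : i + 1 < T.n) {t : ℝ × ℝ} (ht : t ∈ T.carrier)
    (h1 : (T.v i).1 ≤ t.1) (h2 : t.1 ≤ (T.v (i+1)).1) :
    t.2 = (T.v i).2 + (t.1 - (T.v i).1) * slp (T.v i) (T.v (i+1)) := by
  rcases Set.mem_iUnion₂.1 ht with ⟨j, hj, htj⟩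
  have hj' : j + 1 < T.n := by simp at hj; omega
  obtain ⟨hj1, hj2, hj3⟩ := edge_param hj' htj
  rcases lt_trichotomy j i with h | rfl | h
  · -- j < i : t.1 = (v (j+1)).1 = (v i).1, j + 1 = i
    have hle : (T.v (j+1)).1 ≤ (T.v i).1 := by
      rcases eq_or_lt_of_le (Nat.succ_le_of_lt h) with he | hl
      · exact le_of_eq (by rw [← he])
      · exact le_of_lt (vmono hl (by omega))
    have ht1 : t.1 = (T.v (j+1)).1 := le_antisymm hj2 (by linarith)
    have hji : j + 1 = i := by
      by_contra hne
      have : (T.v (j+1)).1 < (T.v i).1 := vmono (by omega) (by omega)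
      linarith
    have ht2 : t.2 = (T.v (j+1)).2 := by
      rw [hj3, ht1, slope_spec (vmono (Nat.lt_succ_self j) hj')]
    rw [ht2, ht1, hji]
    ring
  · exact hj3
  · -- i < j : t.1 = (v j).1 = (v (i+1)).1, j = i+1
    have hle : (T.v (i+1)).1 ≤ (T.v j).1 := by
      rcases eq_or_lt_of_le (Nat.succ_le_of_lt h) with he | hl
      · exact le_of_eq (by rw [← he])
      · exact le_of_lt (vmono hl (by omega))
    have ht1 : t.1 = (T.v j).1 := le_antisymm (by linarith) (by linarith)
    have hji : i + 1 = j := by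
      by_contra hne
      have : (T.v (i+1)).1 < (T.v j).1 := vmono (by omega) (by omega)
      linarith
    have ht2 : t.2 = (T.v j).2 := by rw [hj3, ht1]; ring
    rw [ht2, ht1, ← hji, slope_spec (vmono (Nat.lt_succ_self i) hi)]


/-- Interpolation: an affine function dominated at both endpoints is dominated in between. -/
lemma affine_le {c1 m1 c2 m2 x0 x1 x : ℝ} (h0 : c2 + m2*x0 ≤ c1 + m1*x0)
    (h1 : c2 + m2*x1 ≤ c1 + m1*x1) (hx0 : x0 ≤ x) (hx1 : x ≤ x1) :
    c2 + m2*x ≤ c1 + m1*x := by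
  rcases eq_or_lt_of_le (le_trans hx0 hx1) with he | hlt
  · have : x = x0 := le_antisymm (he ▸ hx1) hx0
    rw [this]; exact h0
  · nlinarith [mul_nonneg (by linarith : (0:ℝ) ≤ x1 - x) (by linarith : (0:ℝ) ≤ (c1+m1*x0) - (c2+m2*x0)),
      mul_nonneg (by linarith : (0:ℝ) ≤ x - x0) (by linarith : (0:ℝ) ≤ (c1+m1*x1) - (c2+m2*x1))]

/-- Extrapolation: if an affine function is below another at `x0` and they agree at
`x1 > x0`, then beyond `x1` the order is reversed. -/
lemma affine_extend {c1 m1 c2 m2 x0 x1 x : ℝ} (h0 : c2 + m2*x0 ≤ c1 + m1*x0)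
    (h1 : c2 + m2*x1 = c1 + m1*x1) (hx0 : x0 < x1) (hx : x1 ≤ x) :
    c1 + m1*x ≤ c2 + m2*x := by
  nlinarith [mul_nonneg (by linarith : (0:ℝ) ≤ x - x1) (by linarith : (0:ℝ) ≤ (c1+m1*x0) - (c2+m2*x0))]

/-- Main geometric lemma (left guard): if `g` left of `v i` sees `p` on edge `i`
(with `x(v i) < x(p)`), then `g` sees every point of `[p, v (i+1)]`. -/
lemma sees_right {i : ℕ} (hi : i + 1 < T.n) {g p : ℝ × ℝ} (hg : g.1 < (T.v i).1)
    (hp : p ∈ T.edge i) (hpl : (T.v i).1 < p.1) (hpr : p.1 < (T.v (i+1)).1)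
    (hsee : T.sees g p) {z : ℝ × ℝ} (hz : z ∈ segment ℝ p (T.v (i+1))) :
    T.sees g z := by
  set Xi := (T.v i).1 with hXi
  set Yi := (T.v i).2 with hYi
  set s := slp (T.v i) (T.v (i+1)) with hs
  have hii : Xi < (T.v (i+1)).1 := vmono (Nat.lt_succ_self i) hi
  obtain ⟨hp1, hp2, hp3⟩ := edge_param hi hp
  obtain ⟨hz1, hz2, hz3⟩ := seg_param hpr hz
  have hYi1 : (T.v (i+1)).2 = Yi + ((T.v (i+1)).1 - Xi) * s := slope_spec hii
  have hzslp : slp p (T.v (i+1)) = s := by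
    rw [slp, hYi1, hp3]
    rw [div_eq_iff (by linarith : (T.v (i+1)).1 - p.1 ≠ 0)]
    ring
  have hz3' : z.2 = Yi + (z.1 - Xi) * s := by rw [hz3, hzslp, hp3]; ring
  have hgp : g.1 < p.1 := lt_trans hg hpl
  have hgz : g.1 < z.1 := lt_of_lt_of_le hgp hz1
  set m := slp g p with hm
  set mz := slp g z with hmz
  have hpm : p.2 = g.2 + (p.1 - g.1) * m := slope_spec hgp
  have hzm : z.2 = g.2 + (z.1 - g.1) * mz := slope_spec hgz
  -- F1 : v i lies below the segment [g, p]
  have F1 : Yi ≤ g.2 + (Xi - g.1) * m := by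
    have hw : ((Xi : ℝ), g.2 + (Xi - g.1) * m) ∈ segment ℝ g p :=
      mem_seg_of_x hgp (le_of_lt hg) (le_of_lt hpl)
    exact hsee _ hw (T.v i) (edge_subset_carrier hi (left_mem_segment ℝ _ _)) rfl
  -- segment [g,p] extended beyond p lies below the edge line
  have hzge : g.2 + (z.1 - g.1) * m ≤ z.2 := by
    have := affine_extend
      (show (Yi - Xi*s) + s*Xi ≤ (g.2 - g.1*m) + m*Xi by linarith)
      (show (Yi - Xi*s) + s*p.1 = (g.2 - g.1*m) + m*p.1 by linarith)
      hpl hz1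
    linarith
  have hK : m ≤ mz := by
    have h' : (z.1 - g.1) * m ≤ (z.1 - g.1) * mz := by linarith
    exact le_of_mul_le_mul_left h' (by linarith)
  intro w hw t ht htx
  obtain ⟨hw1, hw2, hw3⟩ := seg_param hgz hw
  rcases le_or_gt w.1 p.1 with hcase | hcase
  · -- use visibility of p
    have hw' : ((w.1 : ℝ), g.2 + (w.1 - g.1) * m) ∈ segment ℝ g p :=
      mem_seg_of_x hgp hw1 hcase
    have h1 := hsee _ hw' t ht (by rw [htx])
    simp only at h1
    have h2 : (w.1 - g.1) * m ≤ (w.1 - g.1) * mz :=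
      mul_le_mul_of_nonneg_left hK (by linarith)
    rw [hw3]; linarith
  · -- w over the edge: terrain is the edge line there
    have ht2 : t.2 = Yi + (t.1 - Xi) * s :=
      carrier_y hi ht (by rw [htx]; linarith) (by rw [htx]; linarith)
    have hA : (p.1 - g.1) * m ≤ (p.1 - g.1) * mz :=
      mul_le_mul_of_nonneg_left hK (by linarith)
    have key := affine_le
      (show (Yi - Xi*s) + s*p.1 ≤ (g.2 - g.1*mz) + mz*p.1 by linarith)
      (show (Yi - Xi*s) + s*z.1 ≤ (g.2 - g.1*mz) + mz*z.1 by linarith)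
      (le_of_lt hcase) hw2
    rw [hw3, ht2, htx]
    linarith


set_option maxHeartbeats 1000000 in
/-- If `g` left of `v i` sees both `v i` and `p` on edge `i`, it sees every point of
`[v i, p]`. -/
lemma sees_between {i : ℕ} (hi : i + 1 < T.n) {g p : ℝ × ℝ} (hg : g.1 < (T.v i).1)
    (hp : p ∈ T.edge i) (hpl : (T.v i).1 < p.1)
    (hseev : T.sees g (T.v i)) (hsee : T.sees g p)
    {z : ℝ × ℝ} (hz : z ∈ segment ℝ (T.v i) p) :
    T.sees g z := by
  set Xi := (T.v i).1 with hXi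
  set Yi := (T.v i).2 with hYi
  set s := slp (T.v i) (T.v (i+1)) with hs
  have hii : Xi < (T.v (i+1)).1 := vmono (Nat.lt_succ_self i) hi
  obtain ⟨hp1, hp2, hp3⟩ := edge_param hi hp
  obtain ⟨hz1, hz2, hz3⟩ := seg_param hpl hz
  have hzslp : slp (T.v i) p = s := by
    rw [slp, hp3]
    rw [div_eq_iff (by linarith : p.1 - Xi ≠ 0)]
    ring
  have hz3' : z.2 = Yi + (z.1 - Xi) * s := by rw [hz3, hzslp]
  have hgp : g.1 < p.1 := lt_trans hg hpl
  have hgz : g.1 < z.1 := lt_of_lt_of_le hg hz1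
  set m1 := slp g (T.v i) with hm1
  set m := slp g p with hm
  set mz := slp g z with hmz
  have hvm : Yi = g.2 + (Xi - g.1) * m1 := slope_spec hg
  have hpm : p.2 = g.2 + (p.1 - g.1) * m := slope_spec hgp
  have hzm : z.2 = g.2 + (z.1 - g.1) * mz := slope_spec hgz
  -- F1 : v i lies below the segment [g, p]
  have F1 : Yi ≤ g.2 + (Xi - g.1) * m := by
    have hw : ((Xi : ℝ), g.2 + (Xi - g.1) * m) ∈ segment ℝ g p :=
      mem_seg_of_x hgp (le_of_lt hg) (le_of_lt hpl)
    exact hsee _ hw (T.v i) (edge_subset_carrier hi (left_mem_segment ℝ _ _)) rfl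
  -- edge slope dominates sight slope to p
  have hms : m ≤ s := by
    have h' : (p.1 - Xi) * m ≤ (p.1 - Xi) * s := by nlinarith [F1, hpm, hp3, hvm]
    exact le_of_mul_le_mul_left h' (by linarith)
  -- slope to z dominates min of slopes to v i and p
  have hKey : min m1 m ≤ mz := by
    rcases le_total m1 m with hc | hc
    · simp only [min_eq_left hc]
      have h2 : (z.1 - g.1) * m1 ≤ (z.1 - g.1) * mz := by
        have hzz : (z.1 - Xi) * m1 ≤ (z.1 - Xi) * s :=
          mul_le_mul_of_nonneg_left (le_trans hc hms) (by linarith)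
        nlinarith [hz3', hzm, hvm]
      exact le_of_mul_le_mul_left h2 (by linarith)
    · simp only [min_eq_right hc]
      have h2 : (z.1 - g.1) * m ≤ (z.1 - g.1) * mz := by
        have ha : (Xi - g.1) * m ≤ (Xi - g.1) * m1 :=
          mul_le_mul_of_nonneg_left hc (by linarith)
        have hb : (z.1 - Xi) * m ≤ (z.1 - Xi) * s :=
          mul_le_mul_of_nonneg_left hms (by linarith)
        nlinarith [hz3', hzm, hvm]
      exact le_of_mul_le_mul_left h2 (by linarith)
  intro w hw t ht htx
  obtain ⟨hw1, hw2, hw3⟩ := seg_param hgz hw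
  rcases le_or_gt w.1 Xi with hcase | hcase
  · -- below both sight segments
    have hwv : ((w.1 : ℝ), g.2 + (w.1 - g.1) * m1) ∈ segment ℝ g (T.v i) :=
      mem_seg_of_x hg hw1 hcase
    have hwp : ((w.1 : ℝ), g.2 + (w.1 - g.1) * m) ∈ segment ℝ g p :=
      mem_seg_of_x hgp hw1 (by linarith)
    have h1 := hseev _ hwv t ht (by rw [htx])
    have h2 := hsee _ hwp t ht (by rw [htx])
    simp only at h1 h2
    rw [hw3]
    rcases le_total m1 m with hc | hc
    · rw [min_eq_left hc] at hKey
      have := mul_le_mul_of_nonneg_left hKey (by linarith : (0:ℝ) ≤ w.1 - g.1)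
      linarith
    · rw [min_eq_right hc] at hKey
      have := mul_le_mul_of_nonneg_left hKey (by linarith : (0:ℝ) ≤ w.1 - g.1)
      linarith
  · -- over the edge
    have ht2 : t.2 = Yi + (t.1 - Xi) * s :=
      carrier_y hi ht (by rw [htx]; linarith) (by rw [htx]; linarith)
    -- sight line to z is above the edge line at Xi
    have hAtXi : Yi ≤ g.2 + (Xi - g.1) * mz := by
      rcases le_total m1 m with hc | hc
      · rw [min_eq_left hc] at hKey
        have := mul_le_mul_of_nonneg_left hKey (by linarith : (0:ℝ) ≤ Xi - g.1)
        linarith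
      · rw [min_eq_right hc] at hKey
        have := mul_le_mul_of_nonneg_left hKey (by linarith : (0:ℝ) ≤ Xi - g.1)
        linarith
    have key := affine_le
      (show (Yi - Xi*s) + s*Xi ≤ (g.2 - g.1*mz) + mz*Xi by linarith)
      (show (Yi - Xi*s) + s*z.1 ≤ (g.2 - g.1*mz) + mz*z.1 by linarith)
      (le_of_lt hcase) hw2
    rw [hw3, ht2, htx]
    linarith


/-- The point of edge `i` with parameter `u`. -/
noncomputable def ept (T : Terrain) (i : ℕ) (u : ℝ) : ℝ × ℝ :=
  (1-u) • T.v i + u • T.v (i+1)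

lemma ept_fst (i : ℕ) (u : ℝ) :
    (ept T i u).1 = (1-u) * (T.v i).1 + u * (T.v (i+1)).1 := by
  simp [ept]

lemma ept_snd (i : ℕ) (u : ℝ) :
    (ept T i u).2 = (1-u) * (T.v i).2 + u * (T.v (i+1)).2 := by
  simp [ept]

lemma ept_zero (i : ℕ) : ept T i 0 = T.v i := by simp [ept]

lemma ept_one (i : ℕ) : ept T i 1 = T.v (i+1) := by simp [ept]

lemma ept_mem {i : ℕ} {u : ℝ} (h0 : 0 ≤ u) (h1 : u ≤ 1) : ept T i u ∈ T.edge i :=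
  ⟨1-u, u, by linarith, h0, by ring, rfl⟩

lemma ept_comb {i : ℕ} {α β u u' : ℝ} (h : α + β = 1) :
    α • ept T i u + β • ept T i u' = ept T i (α*u + β*u') := by
  have hα : α = 1 - β := by linarith
  subst hα
  apply Prod.ext
  · simp only [ept, Prod.fst_add, Prod.smul_fst, smul_eq_mul]; ring
  · simp only [ept, Prod.snd_add, Prod.smul_snd, smul_eq_mul]; ring

lemma edge_rep {i : ℕ} {q : ℝ × ℝ} (hq : q ∈ T.edge i) :
    ∃ u, 0 ≤ u ∧ u ≤ 1 ∧ q = ept T i u := by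
  rcases hq with ⟨α, β, hα, hβ, hαβ, rfl⟩
  refine ⟨β, hβ, by linarith, ?_⟩
  have : α = 1 - β := by linarith
  subst this
  rfl

/-- Membership of an `ept` in a segment between two `ept`s. -/
lemma ept_mem_seg {i : ℕ} {u u' w : ℝ} (h0 : u ≤ w) (h1 : w ≤ u') (hlt : u < u') :
    ept T i w ∈ segment ℝ (ept T i u) (ept T i u') := by
  set c := (w - u) / (u' - u) with hc
  have hu' : u' - u ≠ 0 := by linarith
  have hc0 : 0 ≤ c := by apply div_nonneg <;> linarith
  have hc1 : c ≤ 1 := by rw [hc, div_le_one (by linarith)]; linarith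
  refine ⟨1-c, c, by linarith, hc0, by ring, ?_⟩
  rw [ept_comb (by ring)]
  congr 1
  rw [hc]
  field_simp
  ring

lemma intEdge_param {i : ℕ} (hi : i + 1 < T.n) {p : ℝ × ℝ} (hp : p ∈ T.intEdge i) :
    p ∈ T.edge i ∧ (T.v i).1 < p.1 ∧ p.1 < (T.v (i+1)).1 := by
  obtain ⟨hpe, hne⟩ := hp
  obtain ⟨h1, h2, h3⟩ := edge_param hi hpe
  simp only [Set.mem_insert_iff, Set.mem_singleton_iff, not_or] at hne
  refine ⟨hpe, ?_, ?_⟩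
  · rcases eq_or_lt_of_le h1 with he | h
    · exfalso
      exact hne.1 (Prod.ext he.symm (by rw [h3, ← he]; ring))
    · exact h
  · rcases eq_or_lt_of_le h2 with he | h
    · exfalso
      apply hne.2
      apply Prod.ext he
      rw [h3, he, ← slope_spec (vmono (Nat.lt_succ_self i) hi)]
    · exact h

/-- Upward closure of visibility along edge `i` for a guard strictly to the left. -/
lemma up_closed {i : ℕ} (hi : i + 1 < T.n) {g p : ℝ × ℝ} (hg : g.1 < (T.v i).1)
    (hp : p ∈ T.intEdge i) (hsee : T.sees g p)
    {u u' : ℝ} (hu0 : 0 ≤ u) (hu' : u ≤ u') (hu1 : u' ≤ 1)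
    (hseeu : T.sees g (ept T i u)) : T.sees g (ept T i u') := by
  obtain ⟨hpe, hpl, hpr⟩ := intEdge_param hi hp
  have hii : (T.v i).1 < (T.v (i+1)).1 := vmono (Nat.lt_succ_self i) hi
  obtain ⟨up, hup0, hup1, hpeq⟩ := edge_rep hpe
  have hpx : p.1 = (1-up) * (T.v i).1 + up * (T.v (i+1)).1 := by rw [hpeq, ept_fst]
  have hup0' : 0 < up := by nlinarith
  have hup1' : up < 1 := by nlinarith
  rcases eq_or_lt_of_le hu' with rfl | hlt
  · exact hseeu
  rcases eq_or_lt_of_le hu0 with rfl | hu0'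
  · -- u = 0 : g sees v i
    rw [ept_zero] at hseeu
    rcases le_or_gt u' up with hc | hc
    · -- between v i and p
      refine sees_between hi hg hpe hpl hseeu hsee ?_
      have := ept_mem_seg (T := T) (i := i) hu' hc (by linarith)
      rwa [ept_zero, ← hpeq] at this
    · -- beyond p
      refine sees_right hi hg hpe hpl hpr hsee ?_
      have := ept_mem_seg (T := T) (i := i) (le_of_lt hc) hu1 (by linarith)
      rwa [ept_one, ← hpeq] at this
  · -- u > 0 : interior point seen
    have hul1 : u < 1 := lt_of_lt_of_le hlt hu1
    have hux : (ept T i u).1 = (1-u) * (T.v i).1 + u * (T.v (i+1)).1 := ept_fst i u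
    refine sees_right hi hg (ept_mem (le_of_lt hu0') (le_of_lt hul1)) ?_ ?_ hseeu ?_
    · rw [hux]; nlinarith
    · rw [hux]; nlinarith
    · have := ept_mem_seg (T := T) (i := i) (le_of_lt hlt) hu1 (lt_of_lt_of_le hlt hu1)
      rwa [ept_one] at this

set_option maxHeartbeats 1000000 in
/-- For a left guard seeing an interior point of edge `i`, the visible part of the
edge is a segment ending at `v (i+1)`. -/
lemma vis_inter_edge_left {i : ℕ} (hi : i + 1 < T.n) {g p : ℝ × ℝ}
    (hg : g.1 < (T.v i).1) (hp : p ∈ T.intEdge i) (hsee : T.sees g p) :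
    ∃ a ∈ T.edge i, T.vis g ∩ T.edge i = segment ℝ a (T.v (i+1)) := by
  obtain ⟨hpe, hpl, hpr⟩ := intEdge_param hi hp
  have hii : (T.v i).1 < (T.v (i+1)).1 := vmono (Nat.lt_succ_self i) hi
  obtain ⟨up, hup0, hup1, hpeq⟩ := edge_rep hpe
  have hpx : p.1 = (1-up) * (T.v i).1 + up * (T.v (i+1)).1 := by rw [hpeq, ept_fst]
  have hup0' : 0 < up := by nlinarith
  have hup1' : up < 1 := by nlinarith
  set A : Set ℝ := {u | 0 ≤ u ∧ u ≤ 1 ∧ T.sees g (ept T i u)} with hA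
  have hupA : up ∈ A := ⟨le_of_lt hup0', le_of_lt hup1', by rwa [← hpeq]⟩
  have hAne : A.Nonempty := ⟨up, hupA⟩
  have hAbdd : BddBelow A := ⟨0, fun u hu => hu.1⟩
  set t0 := sInf A with ht0
  have ht00 : 0 ≤ t0 := le_csInf hAne fun u hu => hu.1
  have ht0up : t0 ≤ up := csInf_le hAbdd hupA
  have ht01 : t0 < 1 := lt_of_le_of_lt ht0up hup1'
  -- everything strictly above t0 (and ≤ 1) is in A
  have hIoc : ∀ u, t0 < u → u ≤ 1 → u ∈ A := by
    intro u hu hu1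
    obtain ⟨u'', hu''A, hu''⟩ := exists_lt_of_csInf_lt hAne hu
    exact ⟨le_trans hu''A.1 (le_of_lt hu''), hu1,
      up_closed hi hg hp hsee hu''A.1 (le_of_lt hu'') hu1 hu''A.2.2⟩
  -- t0 itself is in A (closedness via a limit argument)
  have ht0A : t0 ∈ A := by
    refine ⟨ht00, le_of_lt ht01, ?_⟩
    set q := ept T i t0 with hq
    have hqx : q.1 = (1-t0) * (T.v i).1 + t0 * (T.v (i+1)).1 := ept_fst i t0
    have hqe : q ∈ T.edge i := ept_mem ht00 (le_of_lt ht01)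
    obtain ⟨hq1, hq2, hq3⟩ := edge_param hi hqe
    have hgq : g.1 < q.1 := lt_of_lt_of_le hg hq1
    by_contra hns
    simp only [sees, not_forall] at hns
    obtain ⟨w, hw, t, ht, htx, hty⟩ := hns
    replace hty : w.2 < t.2 := lt_of_not_ge hty
    obtain ⟨hw1, hw2, hw3⟩ := seg_param hgq hw
    rcases eq_or_lt_of_le hw2 with he | hwlt
    · -- w = q : but the terrain is a graph
      have hweq : w.2 = q.2 := by rw [hw3, he, ← slope_spec hgq]
      have ht2 : t.2 = (T.v i).2 + (t.1 - (T.v i).1) * slp (T.v i) (T.v (i+1)) :=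
        carrier_y hi ht (by rw [htx, he]; exact hq1) (by rw [htx, he]; exact hq2)
      rw [ht2, htx, he, ← hq3] at hty
      linarith [hweq ▸ hty]
    · -- w strictly left of q : limit of sight lines from the right
      set f : ℝ → ℝ := fun u => g.2 + (w.1 - g.1) *
        ((((1-u) * (T.v i).2 + u * (T.v (i+1)).2) - g.2) /
         (((1-u) * (T.v i).1 + u * (T.v (i+1)).1) - g.1)) with hf
      have hden : ((1-t0) * (T.v i).1 + t0 * (T.v (i+1)).1) - g.1 ≠ 0 := by
        rw [← hqx]; linarith
      have hcont : ContinuousAt f t0 := by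
        apply ContinuousAt.add continuousAt_const
        apply ContinuousAt.mul continuousAt_const
        exact ContinuousAt.div (by fun_prop) (by fun_prop) hden
      have hq2' : q.2 = (1-t0) * (T.v i).2 + t0 * (T.v (i+1)).2 := ept_snd i t0
      have hft0 : f t0 = w.2 := by
        rw [hf, hw3]
        simp only
        rw [slp, ← hqx, ← hq2']
      have hev : ∀ᶠ u in nhdsWithin t0 (Set.Ioi t0), t.2 ≤ f u := by
        filter_upwards [Ioo_mem_nhdsGT_of_mem (Set.mem_Ico.2 ⟨le_refl t0, ht01⟩)]
        intro u hu
        obtain ⟨hu0, hu1⟩ := hu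
        have huA := hIoc u hu0 (le_of_lt hu1)
        have hgu : g.1 < (ept T i u).1 := by
          rw [ept_fst]
          have : q.1 ≤ (1-u) * (T.v i).1 + u * (T.v (i+1)).1 := by
            rw [hqx]; nlinarith
          linarith
        have hwu : w.1 ≤ (ept T i u).1 := by
          rw [ept_fst]
          have : q.1 ≤ (1-u) * (T.v i).1 + u * (T.v (i+1)).1 := by
            rw [hqx]; nlinarith
          linarith
        have hmem : ((w.1 : ℝ), g.2 + (w.1 - g.1) * slp g (ept T i u)) ∈
            segment ℝ g (ept T i u) := mem_seg_of_x hgu hw1 hwu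
        have := huA.2.2 _ hmem t ht (by rw [htx])
        simp only at this
        have hfu : f u = g.2 + (w.1 - g.1) * slp g (ept T i u) := by
          rw [hf]
          simp only
          rw [slp, ept_fst, ept_snd]
        rw [hfu]
        exact this
      have := ge_of_tendsto (hcont.continuousWithinAt.tendsto) hev
      rw [hft0] at this
      linarith
  -- A is exactly [t0, 1]
  have hAeq : ∀ u, u ∈ A ↔ t0 ≤ u ∧ u ≤ 1 := by
    intro u
    constructor
    · intro hu
      exact ⟨csInf_le hAbdd hu, hu.2.1⟩
    · intro ⟨h1, h2⟩
      exact ⟨le_trans ht00 h1, h2, up_closed hi hg hp hsee ht00 h1 h2 ht0A.2.2⟩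
  refine ⟨ept T i t0, ept_mem ht00 (le_of_lt ht01), ?_⟩
  apply Set.eq_of_subset_of_subset
  · rintro q' ⟨⟨hq'c, hq's⟩, hq'e⟩
    obtain ⟨u, hu0, hu1, rfl⟩ := edge_rep hq'e
    have huA : u ∈ A := ⟨hu0, hu1, hq's⟩
    have := (hAeq u).1 huA
    rcases eq_or_lt_of_le this.1 with rfl | h
    · exact left_mem_segment ℝ _ _
    · have := ept_mem_seg (T := T) (i := i) this.1 this.2 (lt_of_lt_of_le h this.2)
      rwa [ept_one] at this
  · intro z hz
    rw [show T.v (i+1) = ept T i 1 from (ept_one i).symm] at hz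
    obtain ⟨α, β, hα, hβ, hαβ, rfl⟩ := hz
    rw [ept_comb hαβ]
    set u := α * t0 + β * 1 with hu
    have hu0 : t0 ≤ u := by nlinarith
    have hu1 : u ≤ 1 := by nlinarith
    have huA := (hAeq u).2 ⟨hu0, hu1⟩
    exact ⟨⟨edge_subset_carrier hi (ept_mem huA.1 hu1), huA.2.2⟩, ept_mem huA.1 hu1⟩

/-- Reflection of the plane in the `y`-axis. -/
def refl2 (p : ℝ × ℝ) : ℝ × ℝ := (-p.1, p.2)

lemma refl2_invol (p : ℝ × ℝ) : refl2 (refl2 p) = p := by simp [refl2]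

lemma refl2_inj : Function.Injective refl2 := by
  intro a b h
  have := congrArg refl2 h
  rwa [refl2_invol, refl2_invol] at this

lemma refl2_comb (α β : ℝ) (a b : ℝ × ℝ) :
    refl2 (α • a + β • b) = α • refl2 a + β • refl2 b := by
  apply Prod.ext <;> simp [refl2] <;> ring

lemma refl2_seg {a b z : ℝ × ℝ} (hz : z ∈ segment ℝ a b) :
    refl2 z ∈ segment ℝ (refl2 a) (refl2 b) := by
  obtain ⟨α, β, hα, hβ, hαβ, rfl⟩ := hz
  exact ⟨α, β, hα, hβ, hαβ, (refl2_comb α β a b).symm⟩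

lemma refl2_seg_iff {a b z : ℝ × ℝ} :
    refl2 z ∈ segment ℝ (refl2 a) (refl2 b) ↔ z ∈ segment ℝ a b := by
  constructor
  · intro h
    have := refl2_seg h
    rwa [refl2_invol, refl2_invol, refl2_invol] at this
  · exact refl2_seg

/-- The left-right mirrored terrain. -/
def flip (T : Terrain) : Terrain where
  n := T.n
  hn := T.hn
  v := fun j => refl2 (T.v (T.n - 1 - j))
  mono := by
    intro a b hab hb
    simp only [refl2, neg_lt_neg_iff]
    exact T.mono (T.n - 1 - b) (T.n - 1 - a) (by omega) (by omega)

lemma flip_v (j : ℕ) : (flip T).v j = refl2 (T.v (T.n - 1 - j)) := rfl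

lemma flip_edge {j : ℕ} (hj : j + 1 < T.n) :
    (flip T).edge j = refl2 '' T.edge (T.n - 2 - j) := by
  have h1 : T.n - 1 - j = (T.n - 2 - j) + 1 := by omega
  have h2 : T.n - 1 - (j+1) = T.n - 2 - j := by omega
  apply Set.eq_of_subset_of_subset
  · intro z hz
    rw [edge, flip_v, flip_v, h1, h2] at hz
    rw [segment_symm] at hz
    refine ⟨refl2 z, ?_, refl2_invol z⟩
    rw [edge, ← refl2_seg_iff, refl2_invol]
    exact hz
  · rintro _ ⟨z, hz, rfl⟩
    rw [edge, flip_v, flip_v, h1, h2, segment_symm]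
    exact refl2_seg hz
  
lemma flip_carrier : (flip T).carrier = refl2 '' T.carrier := by
  apply Set.eq_of_subset_of_subset
  · intro z hz
    rcases Set.mem_iUnion₂.1 hz with ⟨j, hj, hzj⟩
    simp only [Finset.mem_range, Finset.mem_coe] at hj
    have hfn : (flip T).n = T.n := rfl
    rw [hfn] at hj
    have hj' : j + 1 < T.n := by have := T.hn; omega
    rw [flip_edge hj'] at hzj
    obtain ⟨z', hz', rfl⟩ := hzj
    refine ⟨z', ?_, rfl⟩
    have hgoal : T.n - 2 - j ∈ Finset.range (T.n - 1) := by
      simp only [Finset.mem_range]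
      have := T.hn
      omega
    exact Set.mem_biUnion hgoal hz'
  · rintro _ ⟨z, hz, rfl⟩
    rcases Set.mem_iUnion₂.1 hz with ⟨j, hj, hzj⟩
    simp only [Finset.mem_range] at hj
    have hfn : (flip T).n = T.n := rfl
    have hj' : (T.n - 2 - j) + 1 < T.n := by have := T.hn; omega
    have hjj : T.n - 2 - (T.n - 2 - j) = j := by have := T.hn; omega
    have hmem : refl2 z ∈ (flip T).edge (T.n - 2 - j) := by
      rw [flip_edge hj', hjj]
      exact ⟨z, hzj, rfl⟩
    exact Set.mem_biUnion (show T.n - 2 - j ∈ Finset.range ((flip T).n - 1) by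
      simp only [Finset.mem_range, hfn]; omega) hmem

lemma flip_sees {g q : ℝ × ℝ} : (flip T).sees (refl2 g) (refl2 q) ↔ T.sees g q := by
  constructor
  · intro h z hz t ht htx
    have h1 := h (refl2 z) (refl2_seg hz) (refl2 t) (by rw [flip_carrier]; exact ⟨t, ht, rfl⟩)
      (by simp [refl2]; exact htx)
    simpa [refl2] using h1
  · intro h z hz t ht htx
    rw [flip_carrier] at ht
    obtain ⟨t', ht', rfl⟩ := ht
    have hz' : refl2 z ∈ segment ℝ g q := by
      have := refl2_seg hz
      rwa [refl2_invol, refl2_invol] at this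
    have h1 := h (refl2 z) hz' t' ht' (by simp [refl2] at htx ⊢; linarith)
    simpa [refl2] using h1

end TerrainAux

open TerrainAux

/-- If `g ∈ T` with `x(g) < x(v_i)` sees some `p ∈ int(e_i)`, then `g`
sees every point of `[p, v_{i+1}]`, in particular `v_{i+1}`, and `V(g) ∩ e_i` is a
single segment containing `v_{i+1}`; and symmetrically for `x(g) > x(v_{i+1})`. -/
theorem single_interval_visibility (T : Terrain) (i : ℕ) (hi : i + 1 < T.n) :
    (∀ g ∈ T.carrier, g.1 < (T.v i).1 → ∀ p ∈ T.intEdge i, T.sees g p →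
      (∀ z ∈ segment ℝ p (T.v (i + 1)), T.sees g z) ∧
      T.sees g (T.v (i + 1)) ∧
      ∃ a ∈ T.edge i, T.vis g ∩ T.edge i = segment ℝ a (T.v (i + 1))) ∧
    (∀ g ∈ T.carrier, (T.v (i + 1)).1 < g.1 → ∀ p ∈ T.intEdge i, T.sees g p →
      (∀ z ∈ segment ℝ (T.v i) p, T.sees g z) ∧
      T.sees g (T.v i) ∧
      ∃ a ∈ T.edge i, T.vis g ∩ T.edge i = segment ℝ (T.v i) a) := by
  constructor
  · intro g _ hg p hp hsee
    obtain ⟨hpe, hpl, hpr⟩ := intEdge_param hi hp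
    have conj1 : ∀ z ∈ segment ℝ p (T.v (i + 1)), T.sees g z :=
      fun z hz => sees_right hi hg hpe hpl hpr hsee hz
    exact ⟨conj1, conj1 _ (right_mem_segment ℝ _ _), vis_inter_edge_left hi hg hp hsee⟩
  · intro g _ hg p hp hsee
    have hn2 := T.hn
    have hi'T : (T.n - 2 - i) + 1 < T.n := by omega
    have hidx1 : T.n - 1 - (T.n - 2 - i) = i + 1 := by omega
    have hidx2 : T.n - 1 - ((T.n - 2 - i) + 1) = i := by omega
    have hidx3 : T.n - 2 - (T.n - 2 - i) = i := by omega
    have hvi' : (flip T).v (T.n - 2 - i) = refl2 (T.v (i+1)) := by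
      rw [flip_v, hidx1]
    have hvi'1 : (flip T).v ((T.n - 2 - i)+1) = refl2 (T.v i) := by
      rw [flip_v, hidx2]
    have hedge' : (flip T).edge (T.n - 2 - i) = refl2 '' T.edge i := by
      rw [flip_edge hi'T, hidx3]
    have hTn : (flip T).n = T.n := rfl
    have hi' : (T.n - 2 - i) + 1 < (flip T).n := lt_of_lt_of_le hi'T (le_of_eq hTn.symm)
    have hg' : (refl2 g).1 < ((flip T).v (T.n - 2 - i)).1 := by
      rw [hvi']; simp only [refl2]; linarith
    have hp' : refl2 p ∈ (flip T).intEdge (T.n - 2 - i) := by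
      obtain ⟨hpe, hne⟩ := hp
      refine ⟨by rw [hedge']; exact ⟨p, hpe, rfl⟩, ?_⟩
      simp only [Set.mem_insert_iff, Set.mem_singleton_iff, not_or] at hne ⊢
      rw [hvi', hvi'1]
      exact ⟨fun h => hne.2 (refl2_inj h), fun h => hne.1 (refl2_inj h)⟩
    have hsee' : (flip T).sees (refl2 g) (refl2 p) := flip_sees.2 hsee
    obtain ⟨hpe', hpl', hpr'⟩ := intEdge_param hi' hp'
    have conj1 : ∀ z ∈ segment ℝ (T.v i) p, T.sees g z := by
      intro z hz
      have hz' : refl2 z ∈ segment ℝ (refl2 p) ((flip T).v ((T.n - 2 - i)+1)) := by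
        rw [hvi'1, segment_symm]
        exact refl2_seg hz
      exact flip_sees.1 (sees_right hi' hg' hpe' hpl' hpr' hsee' hz')
    refine ⟨conj1, conj1 _ (left_mem_segment ℝ _ _), ?_⟩
    obtain ⟨a', ha'e, heq⟩ := vis_inter_edge_left hi' hg' hp' hsee'
    rw [hedge'] at ha'e
    obtain ⟨a, hae, rfl⟩ := ha'e
    refine ⟨a, hae, ?_⟩
    ext q
    constructor
    · rintro ⟨⟨hqc, hqs⟩, hqe⟩
      have hq' : refl2 q ∈ (flip T).vis (refl2 g) ∩ (flip T).edge (T.n - 2 - i) := by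
        refine ⟨⟨?_, flip_sees.2 hqs⟩, by rw [hedge']; exact ⟨q, hqe, rfl⟩⟩
        rw [flip_carrier]
        exact ⟨q, hqc, rfl⟩
      rw [heq, hvi'1, segment_symm] at hq'
      rwa [refl2_seg_iff] at hq'
    · intro hq
      have hq' : refl2 q ∈ segment ℝ (refl2 a) ((flip T).v ((T.n - 2 - i)+1)) := by
        rw [hvi'1, segment_symm]
        exact refl2_seg hq
      rw [← heq] at hq'
      obtain ⟨⟨hqc', hqs'⟩, hqe'⟩ := hq'
      rw [hedge'] at hqe'
      obtain ⟨q'', hq''e, hq''⟩ := hqe'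
      have hqq : q'' = q := refl2_inj hq''
      subst hqq
      exact ⟨⟨edge_subset_carrier hi hq''e, flip_sees.1 hqs'⟩, hq''e⟩
end

section
/- Let T be a terrain, C a finite cover of T, and e an edge of T. If g ∈ C and g' ∈ C are both left-guards of e, then g = g'. Likewise, if g ∈ C and g' ∈ C are both right-guards of e, then g = g'. Hence a critical edge has at most one left-guard and at most one right-guard. -/
open Set

/- ------------------ auxiliary lemmas ------------------- -/

private lemma seg_mem_iff' {u w z : ℝ × ℝ} (h : u.1 < w.1) :
    z ∈ segment ℝ u w ↔ u.1 ≤ z.1 ∧ z.1 ≤ w.1 ∧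
      z.2 * (w.1 - u.1) = u.2 * (w.1 - z.1) + w.2 * (z.1 - u.1) := by
  constructor
  · rintro ⟨a, b, ha, hb, hab, rfl⟩
    simp only [Prod.fst_add, Prod.snd_add, Prod.smul_fst, Prod.smul_snd, smul_eq_mul]
    have ha1 : a = 1 - b := by linarith
    subst ha1
    refine ⟨by nlinarith [mul_nonneg hb (by linarith : (0:ℝ) ≤ w.1 - u.1)],
      by nlinarith [mul_nonneg (by linarith : (0:ℝ) ≤ 1 - b) (by linarith : (0:ℝ) ≤ w.1 - u.1)],
      by ring⟩
  · rintro ⟨h1, h2, h3⟩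
    have hD : w.1 - u.1 ≠ 0 := by linarith
    refine ⟨(w.1 - z.1) / (w.1 - u.1), (z.1 - u.1) / (w.1 - u.1),
      div_nonneg (by linarith) (by linarith), div_nonneg (by linarith) (by linarith),
      by field_simp; ring, ?_⟩
    apply Prod.ext
    · simp only [Prod.fst_add, Prod.smul_fst, smul_eq_mul]
      field_simp
      ring
    · simp only [Prod.snd_add, Prod.smul_snd, smul_eq_mul]
      field_simp
      linarith [h3]

namespace Terrain

lemma edge_subset_carrier' (T : Terrain) (i : ℕ) (hi : i + 1 < T.n) :
    T.edge i ⊆ T.carrier := by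
  intro x hx
  exact Set.mem_iUnion₂.2 ⟨i, Finset.mem_range.2 (by omega), hx⟩

lemma carrier_colinear (T : Terrain) (i : ℕ) (hi : i + 1 < T.n) {t : ℝ × ℝ}
    (ht : t ∈ T.carrier) (h1 : (T.v i).1 ≤ t.1) (h2 : t.1 ≤ (T.v (i+1)).1) :
    t.2 * ((T.v (i+1)).1 - (T.v i).1)
      = (T.v i).2 * ((T.v (i+1)).1 - t.1) + (T.v (i+1)).2 * (t.1 - (T.v i).1) := by
  obtain ⟨j, hj, htj⟩ := Set.mem_iUnion₂.1 ht
  rw [Finset.mem_range] at hj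
  have hj1 : j + 1 < T.n := by omega
  have hmj := T.mono j (j+1) (Nat.lt_succ_self j) hj1
  rw [Terrain.edge, seg_mem_iff' hmj] at htj
  obtain ⟨hb1, hb2, hcol⟩ := htj
  rcases lt_trichotomy j i with hji | rfl | hij
  · have hle : (T.v (j+1)).1 ≤ (T.v i).1 := by
      rcases eq_or_lt_of_le (by omega : j + 1 ≤ i) with h | h
      · rw [h]
      · exact le_of_lt (T.mono (j+1) i h (by omega))
    have hx : t.1 = (T.v (j+1)).1 := by linarith
    have hji2 : j + 1 = i := by
      rcases eq_or_lt_of_le (by omega : j + 1 ≤ i) with h | h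
      · exact h
      · exfalso
        have := T.mono (j+1) i h (by omega)
        linarith
    subst hji2
    have ht2 : t.2 = (T.v (j+1)).2 := by
      have he : t.2 * ((T.v (j+1)).1 - (T.v j).1)
          = (T.v (j+1)).2 * ((T.v (j+1)).1 - (T.v j).1) := by
        rw [hcol, hx]; ring
      exact mul_right_cancel₀ (by linarith) he
    rw [ht2, hx]; ring
  · exact hcol
  · have hge : (T.v (i+1)).1 ≤ (T.v j).1 := by
      rcases eq_or_lt_of_le (by omega : i + 1 ≤ j) with h | h
      · rw [h]
      · exact le_of_lt (T.mono (i+1) j h (by omega))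
    have hx : t.1 = (T.v (i+1)).1 := by linarith
    have hij2 : i + 1 = j := by
      rcases eq_or_lt_of_le (by omega : i + 1 ≤ j) with h | h
      · exact h
      · exfalso
        have := T.mono (i+1) j h (by omega)
        linarith
    subst hij2
    have hx2 : t.1 = (T.v (i+1)).1 := hx
    have ht2 : t.2 = (T.v (i+1)).2 := by
      have he : t.2 * ((T.v (i+1+1)).1 - (T.v (i+1)).1)
          = (T.v (i+1)).2 * ((T.v (i+1+1)).1 - (T.v (i+1)).1) := by
        rw [hcol, hx2]; ring
      exact mul_right_cancel₀ (by linarith) he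
    rw [ht2, hx2]; ring

lemma intEdge_spec (T : Terrain) (i : ℕ) (hi : i + 1 < T.n) {q : ℝ × ℝ}
    (hq : q ∈ T.intEdge i) :
    (T.v i).1 < q.1 ∧ q.1 < (T.v (i+1)).1 ∧
      q.2 * ((T.v (i+1)).1 - (T.v i).1)
        = (T.v i).2 * ((T.v (i+1)).1 - q.1) + (T.v (i+1)).2 * (q.1 - (T.v i).1) := by
  obtain ⟨hqe, hqn⟩ := hq
  have hm := T.mono i (i+1) (Nat.lt_succ_self i) hi
  rw [Terrain.edge, seg_mem_iff' hm] at hqe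
  obtain ⟨h1, h2, h3⟩ := hqe
  simp only [Set.mem_insert_iff, Set.mem_singleton_iff, not_or] at hqn
  refine ⟨?_, ?_, h3⟩
  · rcases eq_or_lt_of_le h1 with h | h
    · exfalso
      apply hqn.1
      have hq2 : q.2 = (T.v i).2 := by
        have he : q.2 * ((T.v (i+1)).1 - (T.v i).1)
            = (T.v i).2 * ((T.v (i+1)).1 - (T.v i).1) := by
          rw [h3, ← h]; ring
        exact mul_right_cancel₀ (by linarith) he
      exact Prod.ext h.symm hq2
    · exact h
  · rcases eq_or_lt_of_le h2 with h | h
    · exfalso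
      apply hqn.2
      have hq2 : q.2 = (T.v (i+1)).2 := by
        have he : q.2 * ((T.v (i+1)).1 - (T.v i).1)
            = (T.v (i+1)).2 * ((T.v (i+1)).1 - (T.v i).1) := by
          rw [h3, h]; ring
        exact mul_right_cancel₀ (by linarith) he
      exact Prod.ext h hq2
    · exact h

end Terrain
namespace Terrain

/-- A guard strictly left of edge `e_i` that sees a point `q ∈ int(e_i)`
sees every point of `e_i` to the right of `q`. -/
lemma sees_right (T : Terrain) (i : ℕ) (hi : i + 1 < T.n) {w q r : ℝ × ℝ}
    (hw : w.1 < (T.v i).1) (hq : q ∈ T.intEdge i) (hr : r ∈ T.edge i)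
    (hqr : q.1 ≤ r.1) (hsee : T.sees w q) : T.sees w r := by
  have hm : (T.v i).1 < (T.v (i+1)).1 := T.mono i (i+1) (Nat.lt_succ_self i) hi
  obtain ⟨hq1, hq2, hqc⟩ := T.intEdge_spec i hi hq
  rw [Terrain.edge, seg_mem_iff' hm] at hr
  obtain ⟨hr1, hr2, hrc⟩ := hr
  have hwq : w.1 < q.1 := hw.trans hq1
  have hwr : w.1 < r.1 := lt_of_lt_of_le hwq hqr
  set a : ℝ × ℝ := T.v i with hadef
  set b : ℝ × ℝ := T.v (i+1) with hbdef
  -- Step 1: `w` lies on or above the line through `a`, `b`.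
  have hK : a.2 * (b.1 - w.1) + b.2 * (w.1 - a.1) ≤ w.2 * (b.1 - a.1) := by
    set y0 : ℝ := (w.2 * (q.1 - a.1) + q.2 * (a.1 - w.1)) / (q.1 - w.1) with hy0
    have hz0 : ((a.1, y0) : ℝ × ℝ) ∈ segment ℝ w q := by
      rw [seg_mem_iff' hwq]
      refine ⟨le_of_lt hw, le_of_lt hq1, ?_⟩
      have hne0 : q.1 - w.1 ≠ 0 := by linarith
      rw [hy0]
      field_simp
    have hacar : a ∈ T.carrier :=
      T.edge_subset_carrier' i hi (left_mem_segment ℝ (T.v i) (T.v (i+1)))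
    have hay0 : a.2 ≤ y0 := hsee _ hz0 a hacar rfl
    have h1 : a.2 * (q.1 - w.1) ≤ w.2 * (q.1 - a.1) + q.2 * (a.1 - w.1) := by
      rw [hy0] at hay0
      have := (le_div_iff₀ (by linarith : (0:ℝ) < q.1 - w.1)).1 hay0
      linarith
    have h2 : a.2 * (q.1 - w.1) * (b.1 - a.1)
        ≤ (w.2 * (q.1 - a.1) + q.2 * (a.1 - w.1)) * (b.1 - a.1) :=
      mul_le_mul_of_nonneg_right h1 (by linarith)
    have h3 : q.2 * (b.1 - a.1) * (a.1 - w.1)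
        = (a.2 * (b.1 - q.1) + b.2 * (q.1 - a.1)) * (a.1 - w.1) := by rw [hqc]
    have h4 : (a.2 * (b.1 - w.1) + b.2 * (w.1 - a.1)) * (q.1 - a.1)
        ≤ w.2 * (b.1 - a.1) * (q.1 - a.1) := by linarith [h2, h3]
    exact le_of_mul_le_mul_right h4 (by linarith : (0:ℝ) < q.1 - a.1)
  -- Step 2: chord of `[w, r]` is above the line on `[a.1, r.1]`, in particular at `q.1`.
  have hchord : ∀ x : ℝ, a.1 ≤ x → x ≤ r.1 →
      (a.2 * (b.1 - x) + b.2 * (x - a.1)) * (r.1 - w.1)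
        ≤ (w.2 * (r.1 - x) + r.2 * (x - w.1)) * (b.1 - a.1) := by
    intro x hx1 hx2
    have e2 : (a.2 * (b.1 - w.1) + b.2 * (w.1 - a.1)) * (r.1 - x)
        ≤ w.2 * (b.1 - a.1) * (r.1 - x) :=
      mul_le_mul_of_nonneg_right hK (by linarith)
    have e3 : r.2 * (b.1 - a.1) * (x - w.1)
        = (a.2 * (b.1 - r.1) + b.2 * (r.1 - a.1)) * (x - w.1) := by rw [hrc]
    linarith [e2, e3]
  -- chord of `[w, r]` at `q.1` is above `q`.
  have hQ : q.2 * (r.1 - w.1) ≤ w.2 * (r.1 - q.1) + r.2 * (q.1 - w.1) := by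
    have h5 := hchord q.1 (le_of_lt hq1) hqr
    have h6 : q.2 * (b.1 - a.1) * (r.1 - w.1)
        = (a.2 * (b.1 - q.1) + b.2 * (q.1 - a.1)) * (r.1 - w.1) := by rw [hqc]
    have h7 : q.2 * (r.1 - w.1) * (b.1 - a.1)
        ≤ (w.2 * (r.1 - q.1) + r.2 * (q.1 - w.1)) * (b.1 - a.1) := by linarith [h5, h6]
    exact le_of_mul_le_mul_right h7 (by linarith : (0:ℝ) < b.1 - a.1)
  -- now prove `w` sees `r`.
  intro z hz t ht htz
  rw [seg_mem_iff' hwr] at hz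
  obtain ⟨hz1, hz2, hzc⟩ := hz
  rcases le_or_gt a.1 z.1 with hcase | hcase
  · -- `z` is above the edge's `x`-range: compare with the line.
    have htc := T.carrier_colinear i hi ht (htz ▸ hcase) (by rw [htz]; linarith)
    have e1 := hchord z.1 hcase hz2
    have e4 : z.2 * (r.1 - w.1) * (b.1 - a.1)
        = (w.2 * (r.1 - z.1) + r.2 * (z.1 - w.1)) * (b.1 - a.1) := by rw [hzc]
    have key : (a.2 * (b.1 - z.1) + b.2 * (z.1 - a.1)) * (r.1 - w.1)
        ≤ z.2 * (b.1 - a.1) * (r.1 - w.1) := by linarith [e1, e4]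
    have key2 : a.2 * (b.1 - z.1) + b.2 * (z.1 - a.1) ≤ z.2 * (b.1 - a.1) :=
      le_of_mul_le_mul_right key (by linarith : (0:ℝ) < r.1 - w.1)
    have ht2 : t.2 * (b.1 - a.1) ≤ z.2 * (b.1 - a.1) := by
      rw [htz] at htc
      linarith [htc]
    exact le_of_mul_le_mul_right ht2 (by linarith : (0:ℝ) < b.1 - a.1)
  · -- `z` is left of the edge: compare with the chord `[w, q]`.
    set y' : ℝ := (w.2 * (q.1 - z.1) + q.2 * (z.1 - w.1)) / (q.1 - w.1) with hy'
    have hz' : ((z.1, y') : ℝ × ℝ) ∈ segment ℝ w q := by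
      rw [seg_mem_iff' hwq]
      refine ⟨hz1, by linarith, ?_⟩
      have hne0 : q.1 - w.1 ≠ 0 := by linarith
      rw [hy']
      field_simp
    have ht' : t.2 ≤ y' := hsee _ hz' t ht htz
    have hyz : y' ≤ z.2 := by
      have ey : y' * (q.1 - w.1) = w.2 * (q.1 - z.1) + q.2 * (z.1 - w.1) := by
        have hne0 : q.1 - w.1 ≠ 0 := by linarith
        rw [hy']
        field_simp
      have e5 : z.2 * (r.1 - w.1) * (q.1 - w.1)
          = (w.2 * (r.1 - z.1) + r.2 * (z.1 - w.1)) * (q.1 - w.1) := by rw [hzc]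
      have e6 : y' * (q.1 - w.1) * (r.1 - w.1)
          = (w.2 * (q.1 - z.1) + q.2 * (z.1 - w.1)) * (r.1 - w.1) := by rw [ey]
      have hfac : 0 ≤ (z.1 - w.1) *
          (w.2 * (r.1 - q.1) + r.2 * (q.1 - w.1) - q.2 * (r.1 - w.1)) :=
        mul_nonneg (by linarith) (by linarith)
      have e7 : y' * ((q.1 - w.1) * (r.1 - w.1)) ≤ z.2 * ((q.1 - w.1) * (r.1 - w.1)) := by
        linarith [e5, e6, hfac]
      exact le_of_mul_le_mul_right e7
        (mul_pos (by linarith : (0:ℝ) < q.1 - w.1) (by linarith : (0:ℝ) < r.1 - w.1))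
    linarith

end Terrain
namespace Terrain

/-- A guard strictly right of edge `e_i` that sees a point `q ∈ int(e_i)`
sees every point of `e_i` to the left of `q`. -/
lemma sees_left (T : Terrain) (i : ℕ) (hi : i + 1 < T.n) {w q r : ℝ × ℝ}
    (hw : (T.v (i+1)).1 < w.1) (hq : q ∈ T.intEdge i) (hr : r ∈ T.edge i)
    (hqr : r.1 ≤ q.1) (hsee : T.sees w q) : T.sees w r := by
  have hm : (T.v i).1 < (T.v (i+1)).1 := T.mono i (i+1) (Nat.lt_succ_self i) hi
  obtain ⟨hq1, hq2, hqc⟩ := T.intEdge_spec i hi hq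
  rw [Terrain.edge, seg_mem_iff' hm] at hr
  obtain ⟨hr1, hr2, hrc⟩ := hr
  have hqw : q.1 < w.1 := hq2.trans hw
  have hrw : r.1 < w.1 := lt_of_le_of_lt hqr hqw
  set a : ℝ × ℝ := T.v i with hadef
  set b : ℝ × ℝ := T.v (i+1) with hbdef
  -- Step 1: `w` lies on or above the line through `a`, `b`.
  have hK : a.2 * (b.1 - w.1) + b.2 * (w.1 - a.1) ≤ w.2 * (b.1 - a.1) := by
    set y0 : ℝ := (q.2 * (w.1 - b.1) + w.2 * (b.1 - q.1)) / (w.1 - q.1) with hy0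
    have hz0 : ((b.1, y0) : ℝ × ℝ) ∈ segment ℝ w q := by
      rw [segment_symm, seg_mem_iff' hqw]
      refine ⟨le_of_lt hq2, le_of_lt hw, ?_⟩
      have hne0 : w.1 - q.1 ≠ 0 := by linarith
      rw [hy0]
      field_simp
    have hbcar : b ∈ T.carrier :=
      T.edge_subset_carrier' i hi (right_mem_segment ℝ (T.v i) (T.v (i+1)))
    have hby0 : b.2 ≤ y0 := hsee _ hz0 b hbcar rfl
    have h1 : b.2 * (w.1 - q.1) ≤ q.2 * (w.1 - b.1) + w.2 * (b.1 - q.1) := by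
      rw [hy0] at hby0
      have := (le_div_iff₀ (by linarith : (0:ℝ) < w.1 - q.1)).1 hby0
      linarith
    have h2 : b.2 * (w.1 - q.1) * (b.1 - a.1)
        ≤ (q.2 * (w.1 - b.1) + w.2 * (b.1 - q.1)) * (b.1 - a.1) :=
      mul_le_mul_of_nonneg_right h1 (by linarith)
    have h3 : q.2 * (b.1 - a.1) * (w.1 - b.1)
        = (a.2 * (b.1 - q.1) + b.2 * (q.1 - a.1)) * (w.1 - b.1) := by rw [hqc]
    have h4 : (a.2 * (b.1 - w.1) + b.2 * (w.1 - a.1)) * (b.1 - q.1)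
        ≤ w.2 * (b.1 - a.1) * (b.1 - q.1) := by linarith [h2, h3]
    exact le_of_mul_le_mul_right h4 (by linarith : (0:ℝ) < b.1 - q.1)
  -- Step 2: chord of `[r, w]` is above the line on `[r.1, b.1]`.
  have hchord : ∀ x : ℝ, r.1 ≤ x → x ≤ b.1 →
      (a.2 * (b.1 - x) + b.2 * (x - a.1)) * (w.1 - r.1)
        ≤ (r.2 * (w.1 - x) + w.2 * (x - r.1)) * (b.1 - a.1) := by
    intro x hx1 hx2
    have e2 : (a.2 * (b.1 - w.1) + b.2 * (w.1 - a.1)) * (x - r.1)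
        ≤ w.2 * (b.1 - a.1) * (x - r.1) :=
      mul_le_mul_of_nonneg_right hK (by linarith)
    have e3 : r.2 * (b.1 - a.1) * (w.1 - x)
        = (a.2 * (b.1 - r.1) + b.2 * (r.1 - a.1)) * (w.1 - x) := by rw [hrc]
    linarith [e2, e3]
  -- chord of `[r, w]` at `q.1` is above `q`.
  have hQ : q.2 * (w.1 - r.1) ≤ r.2 * (w.1 - q.1) + w.2 * (q.1 - r.1) := by
    have h5 := hchord q.1 hqr (le_of_lt hq2)
    have h6 : q.2 * (b.1 - a.1) * (w.1 - r.1)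
        = (a.2 * (b.1 - q.1) + b.2 * (q.1 - a.1)) * (w.1 - r.1) := by rw [hqc]
    have h7 : q.2 * (w.1 - r.1) * (b.1 - a.1)
        ≤ (r.2 * (w.1 - q.1) + w.2 * (q.1 - r.1)) * (b.1 - a.1) := by linarith [h5, h6]
    exact le_of_mul_le_mul_right h7 (by linarith : (0:ℝ) < b.1 - a.1)
  -- now prove `w` sees `r`.
  intro z hz t ht htz
  rw [segment_symm, seg_mem_iff' hrw] at hz
  obtain ⟨hz1, hz2, hzc⟩ := hz
  rcases le_or_gt z.1 b.1 with hcase | hcase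
  · -- `z` is within the edge's `x`-range: compare with the line.
    have htc := T.carrier_colinear i hi ht (by rw [htz]; linarith) (htz ▸ hcase)
    have e1 := hchord z.1 hz1 hcase
    have e4 : z.2 * (w.1 - r.1) * (b.1 - a.1)
        = (r.2 * (w.1 - z.1) + w.2 * (z.1 - r.1)) * (b.1 - a.1) := by rw [hzc]
    have key : (a.2 * (b.1 - z.1) + b.2 * (z.1 - a.1)) * (w.1 - r.1)
        ≤ z.2 * (b.1 - a.1) * (w.1 - r.1) := by linarith [e1, e4]
    have key2 : a.2 * (b.1 - z.1) + b.2 * (z.1 - a.1) ≤ z.2 * (b.1 - a.1) :=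
      le_of_mul_le_mul_right key (by linarith : (0:ℝ) < w.1 - r.1)
    have ht2 : t.2 * (b.1 - a.1) ≤ z.2 * (b.1 - a.1) := by
      rw [htz] at htc
      linarith [htc]
    exact le_of_mul_le_mul_right ht2 (by linarith : (0:ℝ) < b.1 - a.1)
  · -- `z` is right of the edge: compare with the chord `[q, w]`.
    set y' : ℝ := (q.2 * (w.1 - z.1) + w.2 * (z.1 - q.1)) / (w.1 - q.1) with hy'
    have hz' : ((z.1, y') : ℝ × ℝ) ∈ segment ℝ w q := by
      rw [segment_symm, seg_mem_iff' hqw]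
      refine ⟨by linarith, hz2, ?_⟩
      have hne0 : w.1 - q.1 ≠ 0 := by linarith
      rw [hy']
      field_simp
    have ht' : t.2 ≤ y' := hsee _ hz' t ht htz
    have hyz : y' ≤ z.2 := by
      have ey : y' * (w.1 - q.1) = q.2 * (w.1 - z.1) + w.2 * (z.1 - q.1) := by
        have hne0 : w.1 - q.1 ≠ 0 := by linarith
        rw [hy']
        field_simp
      have e5 : z.2 * (w.1 - r.1) * (w.1 - q.1)
          = (r.2 * (w.1 - z.1) + w.2 * (z.1 - r.1)) * (w.1 - q.1) := by rw [hzc]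
      have e6 : y' * (w.1 - q.1) * (w.1 - r.1)
          = (q.2 * (w.1 - z.1) + w.2 * (z.1 - q.1)) * (w.1 - r.1) := by rw [ey]
      have hfac : 0 ≤ (w.1 - z.1) *
          (r.2 * (w.1 - q.1) + w.2 * (q.1 - r.1) - q.2 * (w.1 - r.1)) :=
        mul_nonneg (by linarith) (by linarith)
      have e7 : y' * ((w.1 - q.1) * (w.1 - r.1)) ≤ z.2 * ((w.1 - q.1) * (w.1 - r.1)) := by
        linarith [e5, e6, hfac]
      exact le_of_mul_le_mul_right e7
        (mul_pos (by linarith : (0:ℝ) < w.1 - q.1) (by linarith : (0:ℝ) < w.1 - r.1))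
    linarith

end Terrain
namespace Terrain

/-- From criticality of `e_i` w.r.t. `g` and the cover property, extract a point of
`int(e_i)` seen by `g` and by no other guard. -/
lemma exists_private (T : Terrain) {C : Set (ℝ × ℝ)} (hC : T.IsCover C) {g : ℝ × ℝ}
    (i : ℕ) (hi : i + 1 < T.n) (hcrit : T.IsCriticalWrt C g i) :
    ∃ p ∈ T.intEdge i, T.sees g p ∧ p ∉ T.visSet (C \ {g}) := by
  obtain ⟨-, hnc⟩ := hcrit
  rw [Set.not_subset] at hnc
  obtain ⟨p, hp, hpn⟩ := hnc
  refine ⟨p, hp, ?_, hpn⟩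
  have hpc : p ∈ T.carrier := T.edge_subset_carrier' i hi hp.1
  have hpv : p ∈ T.visSet C := by rw [hC.2]; exact hpc
  simp only [Terrain.visSet, Set.mem_iUnion] at hpv
  obtain ⟨u, hu, hup⟩ := hpv
  by_cases hug : u = g
  · exact hug ▸ hup.2
  · exfalso
    apply hpn
    exact Set.mem_iUnion₂.2 ⟨u, ⟨hu, hug⟩, hup⟩

lemma step_left (T : Terrain) {C : Set (ℝ × ℝ)} (hC : T.IsCover C) (i : ℕ)
    (hi : i + 1 < T.n) {g g' p p' : ℝ × ℝ} (hg : g ∈ C) (hne : g ≠ g')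
    (hgx : g.1 < (T.v i).1) (hp : p ∈ T.intEdge i) (hps : T.sees g p)
    (hp' : p' ∈ T.intEdge i) (hpn' : p' ∉ T.visSet (C \ {g'}))
    (hle : p.1 ≤ p'.1) : False := by
  have hsp' : T.sees g p' := T.sees_right i hi hgx hp hp'.1 hle hps
  apply hpn'
  exact Set.mem_iUnion₂.2 ⟨g, ⟨hg, hne⟩,
    ⟨T.edge_subset_carrier' i hi hp'.1, hsp'⟩⟩

lemma step_right (T : Terrain) {C : Set (ℝ × ℝ)} (hC : T.IsCover C) (i : ℕ)
    (hi : i + 1 < T.n) {g g' p p' : ℝ × ℝ} (hg : g ∈ C) (hne : g ≠ g')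
    (hgx : (T.v (i+1)).1 < g.1) (hp : p ∈ T.intEdge i) (hps : T.sees g p)
    (hp' : p' ∈ T.intEdge i) (hpn' : p' ∉ T.visSet (C \ {g'}))
    (hle : p'.1 ≤ p.1) : False := by
  have hsp' : T.sees g p' := T.sees_left i hi hgx hp hp'.1 hle hps
  apply hpn'
  exact Set.mem_iUnion₂.2 ⟨g, ⟨hg, hne⟩,
    ⟨T.edge_subset_carrier' i hi hp'.1, hsp'⟩⟩

end Terrain

/-- A critical edge has at most one left-guard and at most one
right-guard: two left-guards (right-guards) of the same edge coincide. -/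
theorem unique_left_and_right_guard (T : Terrain) (C : Finset (ℝ × ℝ))
    (hC : T.IsCover ↑C) (i : ℕ) (hi : i + 1 < T.n) :
    (∀ g ∈ C, ∀ g' ∈ C, T.IsLeftGuard ↑C g i → T.IsLeftGuard ↑C g' i → g = g') ∧
    (∀ g ∈ C, ∀ g' ∈ C, T.IsRightGuard ↑C g i → T.IsRightGuard ↑C g' i → g = g') := by
  constructor
  · intro g hg g' hg' hL hL'
    by_contra hne
    obtain ⟨p, hp, hps, hpn⟩ := T.exists_private hC i hi hL.2
    obtain ⟨p', hp', hps', hpn'⟩ := T.exists_private hC i hi hL'.2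
    rcases le_total p.1 p'.1 with h | h
    · exact T.step_left hC i hi (Finset.mem_coe.2 hg) hne hL.1 hp hps hp' hpn' h
    · exact T.step_left hC i hi (Finset.mem_coe.2 hg') (Ne.symm hne) hL'.1 hp' hps' hp hpn h
  · intro g hg g' hg' hR hR'
    by_contra hne
    obtain ⟨p, hp, hps, hpn⟩ := T.exists_private hC i hi hR.2
    obtain ⟨p', hp', hps', hpn'⟩ := T.exists_private hC i hi hR'.2
    rcases le_total p'.1 p.1 with h | h
    · exact T.step_right hC i hi (Finset.mem_coe.2 hg) hne hR.1 hp hps hp' hpn' h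
    · exact T.step_right hC i hi (Finset.mem_coe.2 hg') (Ne.symm hne) hR'.1 hp' hps' hp hpn h
end

section
/- Let T be a terrain and let g ∈ T lie in the interior int(e_i) of the edge e_i. Then every point p ∈ T with x(p) ≥ x(g) that is seen by g is also seen by the left endpoint v_i of e_i; symmetrically, every point p ∈ T with x(p) ≤ x(g) that is seen by g is also seen by the right endpoint v_{i+1} of e_i. -/
open Set

set_option maxHeartbeats 1000000

lemma seg_dest {A B z : ℝ × ℝ} (h : z ∈ segment ℝ A B) :
    ∃ t : ℝ, 0 ≤ t ∧ t ≤ 1 ∧ z.1 = A.1 + t * (B.1 - A.1) ∧ z.2 = A.2 + t * (B.2 - A.2) := by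
  rw [segment_eq_image'] at h
  obtain ⟨t, ⟨h0, h1⟩, rfl⟩ := h
  exact ⟨t, h0, h1, by simp [smul_eq_mul], by simp [smul_eq_mul]⟩

lemma seg_mk {A B : ℝ × ℝ} {t : ℝ} (h0 : 0 ≤ t) (h1 : t ≤ 1) :
    (A.1 + t * (B.1 - A.1), A.2 + t * (B.2 - A.2)) ∈ segment ℝ A B := by
  rw [segment_eq_image']
  exact ⟨t, ⟨h0, h1⟩, by simp [Prod.ext_iff, smul_eq_mul]⟩

lemma seg_snd_left {A B z : ℝ × ℝ} (hAB : A.1 < B.1) (hz : z ∈ segment ℝ A B)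
    (hx : z.1 = A.1) : z.2 = A.2 := by
  obtain ⟨t, h0, h1, e1, e2⟩ := seg_dest hz
  have ht : t * (B.1 - A.1) = 0 := by linarith
  rcases mul_eq_zero.1 ht with h | h
  · rw [h] at e2; linarith
  · exfalso; linarith

lemma seg_snd_right {A B z : ℝ × ℝ} (hAB : A.1 < B.1) (hz : z ∈ segment ℝ A B)
    (hx : z.1 = B.1) : z.2 = B.2 := by
  obtain ⟨t, h0, h1, e1, e2⟩ := seg_dest hz
  have ht : (t - 1) * (B.1 - A.1) = 0 := by nlinarith
  rcases mul_eq_zero.1 ht with h | h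
  · have : t = 1 := by linarith
    rw [this] at e2; linarith
  · exfalso; linarith

lemma seg_graph {A B z w : ℝ × ℝ} (hAB : A.1 < B.1) (hz : z ∈ segment ℝ A B)
    (hw : w ∈ segment ℝ A B) (hx : z.1 = w.1) : z.2 = w.2 := by
  obtain ⟨t, _, _, e1, e2⟩ := seg_dest hz
  obtain ⟨s, _, _, f1, f2⟩ := seg_dest hw
  have h : (t - s) * (B.1 - A.1) = 0 := by nlinarith
  rcases mul_eq_zero.1 h with h | h
  · have : t = s := by linarith
    rw [e2, f2, this]
  · exfalso; linarith

lemma seg_fst_bounds {A B z : ℝ × ℝ} (hAB : A.1 ≤ B.1) (hz : z ∈ segment ℝ A B) :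
    A.1 ≤ z.1 ∧ z.1 ≤ B.1 := by
  obtain ⟨t, h0, h1, e1, _⟩ := seg_dest hz
  constructor <;> nlinarith

lemma Terrain.carrier_dest {T : Terrain} {t : ℝ × ℝ} (ht : t ∈ T.carrier) :
    ∃ j, j + 1 < T.n ∧ t ∈ T.edge j := by
  simp only [Terrain.carrier, Set.mem_iUnion, Finset.mem_range, exists_prop] at ht
  obtain ⟨j, hj, h⟩ := ht
  exact ⟨j, by omega, h⟩

lemma Terrain.edge_sub (T : Terrain) {i : ℕ} (hi : i + 1 < T.n) : T.edge i ⊆ T.carrier := by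
  intro p hp
  have : 2 ≤ T.n := T.hn
  exact Set.mem_iUnion₂.2 ⟨i, Finset.mem_range.2 (by omega), hp⟩

lemma Terrain.graph_aux (T : Terrain) {i : ℕ} (hi : i + 1 < T.n) {t w : ℝ × ℝ}
    (ht : t ∈ T.carrier) (hw : w ∈ T.edge i) (hx : t.1 = w.1) : t.2 = w.2 := by
  obtain ⟨j, hj, htj⟩ := Terrain.carrier_dest ht
  have hdi : (T.v i).1 < (T.v (i + 1)).1 := T.mono _ _ (by omega) hi
  have hdj : (T.v j).1 < (T.v (j + 1)).1 := T.mono _ _ (by omega) hj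
  rcases lt_trichotomy j i with h | rfl | h
  · have h1 : (T.v (j + 1)).1 ≤ (T.v i).1 := by
      rcases eq_or_lt_of_le (Nat.succ_le_of_lt h) with he | hlt
      · rw [show j + 1 = i from he]
      · exact (T.mono _ _ hlt (by omega)).le
    have hb := seg_fst_bounds hdj.le htj
    have hb' := seg_fst_bounds hdi.le hw
    have e1 : t.1 = (T.v (j + 1)).1 := le_antisymm hb.2 (by linarith [hb'.1])
    have e2 : w.1 = (T.v i).1 := le_antisymm (by linarith [hb.2]) hb'.1
    have hji : j + 1 = i := by
      by_contra hne
      have := T.mono (j + 1) i (by omega) (by omega)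
      linarith
    have t2 : t.2 = (T.v (j + 1)).2 := seg_snd_right hdj htj e1
    have w2 : w.2 = (T.v i).2 := seg_snd_left hdi hw e2
    rw [t2, w2, hji]
  · exact seg_graph hdi htj hw hx
  · have h1 : (T.v (i + 1)).1 ≤ (T.v j).1 := by
      rcases eq_or_lt_of_le (Nat.succ_le_of_lt h) with he | hlt
      · rw [show i + 1 = j from he]
      · exact (T.mono _ _ hlt (by omega)).le
    have hb := seg_fst_bounds hdj.le htj
    have hb' := seg_fst_bounds hdi.le hw
    have e1 : t.1 = (T.v j).1 := le_antisymm (by linarith [hb'.2]) hb.1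
    have e2 : w.1 = (T.v (i + 1)).1 := le_antisymm hb'.2 (by linarith [hb.1])
    have hji : i + 1 = j := by
      by_contra hne
      have := T.mono (i + 1) j (by omega) (by omega)
      linarith
    have t2 : t.2 = (T.v j).2 := seg_snd_left hdj htj e1
    have w2 : w.2 = (T.v (i + 1)).2 := seg_snd_right hdi hw e2
    rw [t2, w2, hji]

lemma Terrain.intEdge_param {T : Terrain} {i : ℕ} {g : ℝ × ℝ} (hg : g ∈ T.intEdge i) :
    ∃ u : ℝ, 0 < u ∧ u < 1 ∧ g.1 = (T.v i).1 + u * ((T.v (i + 1)).1 - (T.v i).1) ∧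
      g.2 = (T.v i).2 + u * ((T.v (i + 1)).2 - (T.v i).2) := by
  obtain ⟨hseg, hne⟩ := hg
  obtain ⟨u, h0, h1, e1, e2⟩ := seg_dest hseg
  have hne1 : g ≠ T.v i := fun h => hne (by simp [h])
  have hne2 : g ≠ T.v (i + 1) := fun h => hne (by simp [h])
  refine ⟨u, lt_of_le_of_ne h0 ?_, lt_of_le_of_ne h1 ?_, e1, e2⟩
  · intro h
    exact hne1 (Prod.ext_iff.2 ⟨by rw [e1, ← h]; ring, by rw [e2, ← h]; ring⟩)
  · intro h
    exact hne2 (Prod.ext_iff.2 ⟨by rw [e1, h]; ring, by rw [e2, h]; ring⟩)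

lemma key_left (T : Terrain) {i : ℕ} (hi : i + 1 < T.n) {g p : ℝ × ℝ}
    (hg : g ∈ T.intEdge i) (hx : g.1 ≤ p.1) (hsee : T.sees g p) : T.sees (T.v i) p := by
  set a := T.v i with ha
  set b := T.v (i + 1) with hb
  obtain ⟨u, hu0, hu1, hg1, hg2⟩ := Terrain.intEdge_param hg
  have hd : a.1 < b.1 := T.mono i (i + 1) (by omega) hi
  have hag : a.1 < g.1 := by nlinarith
  have hgb : g.1 < b.1 := by nlinarith
  have hap : a.1 < p.1 := lt_of_lt_of_le hag hx
  -- C := cross(a,b,p) ≥ 0 : p lies on or above the edge line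
  have hC : 0 ≤ (b.1 - a.1) * (p.2 - a.2) - (p.1 - a.1) * (b.2 - a.2) := by
    by_cases hpb : p.1 ≤ b.1
    · set ρ := (p.1 - a.1) / (b.1 - a.1) with hρdef
      have hρ0 : 0 ≤ ρ := div_nonneg (by linarith) (by linarith)
      have hρ1 : ρ ≤ 1 := (div_le_one (by linarith)).2 (by linarith)
      have hρid : ρ * (b.1 - a.1) = p.1 - a.1 :=
        div_mul_cancel₀ _ (by intro h; rw [sub_eq_zero] at h; linarith)
      have hwseg : ((a.1 + ρ * (b.1 - a.1), a.2 + ρ * (b.2 - a.2)) : ℝ × ℝ) ∈ T.edge i :=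
        seg_mk hρ0 hρ1
      have h5 := hsee p (right_mem_segment ℝ g p) _ (T.edge_sub hi hwseg)
        (by show a.1 + ρ * (b.1 - a.1) = p.1; linarith)
      have h5' : a.2 + ρ * (b.2 - a.2) ≤ p.2 := h5
      have hρ3 : ρ * (b.1 - a.1) * (b.2 - a.2) = (p.1 - a.1) * (b.2 - a.2) := by
        rw [hρid]
      nlinarith [mul_nonneg (by linarith : (0:ℝ) ≤ b.1 - a.1)
        (by linarith : 0 ≤ p.2 - a.2 - ρ * (b.2 - a.2)), hρ3]
    · push_neg at hpb
      have hpg : g.1 < p.1 := lt_trans hgb hpb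
      set r := (b.1 - g.1) / (p.1 - g.1) with hrdef
      have hr0 : 0 ≤ r := div_nonneg (by linarith) (by linarith)
      have hr1 : r ≤ 1 := (div_le_one (by linarith)).2 (by linarith)
      have hrid : r * (p.1 - g.1) = b.1 - g.1 :=
        div_mul_cancel₀ _ (by intro h; rw [sub_eq_zero] at h; linarith)
      have hzseg : ((g.1 + r * (p.1 - g.1), g.2 + r * (p.2 - g.2)) : ℝ × ℝ) ∈ segment ℝ g p :=
        seg_mk hr0 hr1
      have hbc : b ∈ T.carrier := T.edge_sub hi (right_mem_segment ℝ a b)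
      have h5 := hsee _ hzseg b hbc (by show b.1 = g.1 + r * (p.1 - g.1); linarith)
      have h5' : b.2 ≤ g.2 + r * (p.2 - g.2) := h5
      have hr2 : r * (p.1 - g.1) * (p.2 - g.2) = (b.1 - g.1) * (p.2 - g.2) := by rw [hrid]
      have hcross : 0 ≤ (b.1 - g.1) * (p.2 - g.2) - (p.1 - g.1) * (b.2 - g.2) := by
        nlinarith [mul_nonneg (by linarith : (0:ℝ) ≤ p.1 - g.1)
          (by linarith : 0 ≤ g.2 + r * (p.2 - g.2) - b.2), hr2]
      have hid : (b.1 - g.1) * (p.2 - g.2) - (p.1 - g.1) * (b.2 - g.2)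
          = (1 - u) * ((b.1 - a.1) * (p.2 - a.2) - (p.1 - a.1) * (b.2 - a.2)) := by
        rw [hg1, hg2]; ring
      rw [hid] at hcross
      by_contra hcon
      push_neg at hcon
      nlinarith [mul_pos (by linarith : (0:ℝ) < 1 - u) (by linarith : (0:ℝ) < -((b.1 - a.1) * (p.2 - a.2) - (p.1 - a.1) * (b.2 - a.2)))]
  -- main goal
  intro z hz t' ht' hxt
  obtain ⟨t, ht0, ht1, hz1, hz2⟩ := seg_dest hz
  rcases le_or_gt z.1 g.1 with hzl | hzr
  · -- left of g : use the terrain-graph property on edge i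
    have hza : a.1 ≤ z.1 := by nlinarith
    set ρ := (z.1 - a.1) / (b.1 - a.1) with hρdef
    have hρ0 : 0 ≤ ρ := div_nonneg (by linarith) (by linarith)
    have hρ1 : ρ ≤ 1 := (div_le_one (by linarith)).2 (by linarith)
    have hρid : ρ * (b.1 - a.1) = z.1 - a.1 :=
      div_mul_cancel₀ _ (by intro h; rw [sub_eq_zero] at h; linarith)
    have hwseg : ((a.1 + ρ * (b.1 - a.1), a.2 + ρ * (b.2 - a.2)) : ℝ × ℝ) ∈ T.edge i :=
      seg_mk hρ0 hρ1
    have hgr := T.graph_aux hi ht' hwseg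
      (by show t'.1 = a.1 + ρ * (b.1 - a.1); rw [hxt]; linarith)
    have hgr' : t'.2 = a.2 + ρ * (b.2 - a.2) := hgr
    have hρ2 : ρ * (b.1 - a.1) = t * (p.1 - a.1) := by rw [hρid, hz1]; ring
    have hρ3 : ρ * (b.1 - a.1) * (b.2 - a.2) = t * (p.1 - a.1) * (b.2 - a.2) := by rw [hρ2]
    rw [hgr', hz2]
    nlinarith [mul_nonneg ht0 hC, hρ3, hd]
  · rcases eq_or_lt_of_le hx with hpg | hpg
    · exfalso
      have hzp : z.1 ≤ p.1 := by
        nlinarith [mul_nonneg (by linarith : (0:ℝ) ≤ 1 - t) (by linarith : (0:ℝ) ≤ p.1 - a.1)]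
      rw [← hpg] at hzp
      linarith
    · set r := (z.1 - g.1) / (p.1 - g.1) with hrdef
      have hzp : z.1 ≤ p.1 := by
        nlinarith [mul_nonneg (by linarith : (0:ℝ) ≤ 1 - t) (by linarith : (0:ℝ) ≤ p.1 - a.1)]
      have hr0 : 0 ≤ r := div_nonneg (by linarith) (by linarith)
      have hr1 : r ≤ 1 := (div_le_one (by linarith)).2 (by linarith)
      have hrid : r * (p.1 - g.1) = z.1 - g.1 :=
        div_mul_cancel₀ _ (by intro h; rw [sub_eq_zero] at h; linarith)
      have hyseg : ((g.1 + r * (p.1 - g.1), g.2 + r * (p.2 - g.2)) : ℝ × ℝ) ∈ segment ℝ g p :=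
        seg_mk hr0 hr1
      have h5 := hsee _ hyseg t' ht' (by show t'.1 = g.1 + r * (p.1 - g.1); rw [hxt]; linarith)
      have h5' : t'.2 ≤ g.2 + r * (p.2 - g.2) := h5
      have hkey : (z.2 - g.2) * (p.1 - g.1) - (z.1 - g.1) * (p.2 - g.2)
          = (1 - t) * u * ((b.1 - a.1) * (p.2 - a.2) - (p.1 - a.1) * (b.2 - a.2)) := by
        rw [hz1, hz2, hg1, hg2]; ring
      have hr2 : r * (p.1 - g.1) * (p.2 - g.2) = (z.1 - g.1) * (p.2 - g.2) := by rw [hrid]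
      have h6 : g.2 + r * (p.2 - g.2) ≤ z.2 := by
        nlinarith [hkey, hr2,
          mul_nonneg (mul_nonneg (by linarith : (0:ℝ) ≤ 1 - t) hu0.le) hC,
          (by linarith : (0:ℝ) < p.1 - g.1)]
      linarith

lemma key_right (T : Terrain) {i : ℕ} (hi : i + 1 < T.n) {g p : ℝ × ℝ}
    (hg : g ∈ T.intEdge i) (hx : p.1 ≤ g.1) (hsee : T.sees g p) : T.sees (T.v (i + 1)) p := by
  set a := T.v i with ha
  set b := T.v (i + 1) with hb
  obtain ⟨u, hu0, hu1, hg1, hg2⟩ := Terrain.intEdge_param hg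
  have hd : a.1 < b.1 := T.mono i (i + 1) (by omega) hi
  have hag : a.1 < g.1 := by nlinarith
  have hgb : g.1 < b.1 := by nlinarith
  have hpb : p.1 < b.1 := lt_of_le_of_lt hx hgb
  -- C := cross(a,b,p) ≥ 0 : p lies on or above the edge line
  have hC : 0 ≤ (b.1 - a.1) * (p.2 - a.2) - (p.1 - a.1) * (b.2 - a.2) := by
    by_cases hpa : a.1 ≤ p.1
    · set ρ := (p.1 - a.1) / (b.1 - a.1) with hρdef
      have hρ0 : 0 ≤ ρ := div_nonneg (by linarith) (by linarith)
      have hρ1 : ρ ≤ 1 := (div_le_one (by linarith)).2 (by linarith)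
      have hρid : ρ * (b.1 - a.1) = p.1 - a.1 :=
        div_mul_cancel₀ _ (by intro h; rw [sub_eq_zero] at h; linarith)
      have hwseg : ((a.1 + ρ * (b.1 - a.1), a.2 + ρ * (b.2 - a.2)) : ℝ × ℝ) ∈ T.edge i :=
        seg_mk hρ0 hρ1
      have h5 := hsee p (right_mem_segment ℝ g p) _ (T.edge_sub hi hwseg)
        (by show a.1 + ρ * (b.1 - a.1) = p.1; linarith)
      have h5' : a.2 + ρ * (b.2 - a.2) ≤ p.2 := h5
      have hρ3 : ρ * (b.1 - a.1) * (b.2 - a.2) = (p.1 - a.1) * (b.2 - a.2) := by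
        rw [hρid]
      nlinarith [mul_nonneg (by linarith : (0:ℝ) ≤ b.1 - a.1)
        (by linarith : 0 ≤ p.2 - a.2 - ρ * (b.2 - a.2)), hρ3]
    · push_neg at hpa
      have hpg : p.1 < g.1 := lt_trans hpa hag
      set r := (g.1 - a.1) / (g.1 - p.1) with hrdef
      have hr0 : 0 ≤ r := div_nonneg (by linarith) (by linarith)
      have hr1 : r ≤ 1 := (div_le_one (by linarith)).2 (by linarith)
      have hrid : r * (p.1 - g.1) = a.1 - g.1 := by
        have h := div_mul_cancel₀ (g.1 - a.1) (by intro h; rw [sub_eq_zero] at h; linarith :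
          g.1 - p.1 ≠ 0)
        rw [hrdef]
        linear_combination -h
      have hzseg : ((g.1 + r * (p.1 - g.1), g.2 + r * (p.2 - g.2)) : ℝ × ℝ) ∈ segment ℝ g p :=
        seg_mk hr0 hr1
      have hac : a ∈ T.carrier := T.edge_sub hi (left_mem_segment ℝ a b)
      have h5 := hsee _ hzseg a hac (by show a.1 = g.1 + r * (p.1 - g.1); linarith)
      have h5' : a.2 ≤ g.2 + r * (p.2 - g.2) := h5
      have hr2 : r * (g.1 - p.1) * (p.2 - g.2) = (g.1 - a.1) * (p.2 - g.2) := by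
        linear_combination (-(p.2 - g.2)) * hrid
      have hcross : 0 ≤ (p.1 - g.1) * (a.2 - g.2) - (a.1 - g.1) * (p.2 - g.2) := by
        nlinarith [mul_nonneg (by linarith : (0:ℝ) ≤ g.1 - p.1)
          (by linarith : 0 ≤ g.2 + r * (p.2 - g.2) - a.2), hr2]
      have hid : (p.1 - g.1) * (a.2 - g.2) - (a.1 - g.1) * (p.2 - g.2)
          = u * ((b.1 - a.1) * (p.2 - a.2) - (p.1 - a.1) * (b.2 - a.2)) := by
        rw [hg1, hg2]; ring
      rw [hid] at hcross
      by_contra hcon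
      push_neg at hcon
      nlinarith [mul_pos hu0 (by linarith : (0:ℝ) < -((b.1 - a.1) * (p.2 - a.2) - (p.1 - a.1) * (b.2 - a.2)))]
  -- main goal
  intro z hz t' ht' hxt
  obtain ⟨t, ht0, ht1, hz1, hz2⟩ := seg_dest hz
  rcases le_or_gt g.1 z.1 with hzr | hzl
  · -- right of g : use the terrain-graph property on edge i
    have hzb : z.1 ≤ b.1 := by
      nlinarith [mul_nonneg ht0 (by linarith : (0:ℝ) ≤ b.1 - p.1)]
    set ρ := (z.1 - a.1) / (b.1 - a.1) with hρdef
    have hρ0 : 0 ≤ ρ := div_nonneg (by linarith) (by linarith)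
    have hρ1 : ρ ≤ 1 := (div_le_one (by linarith)).2 (by linarith)
    have hρid : ρ * (b.1 - a.1) = z.1 - a.1 :=
      div_mul_cancel₀ _ (by intro h; rw [sub_eq_zero] at h; linarith)
    have hwseg : ((a.1 + ρ * (b.1 - a.1), a.2 + ρ * (b.2 - a.2)) : ℝ × ℝ) ∈ T.edge i :=
      seg_mk hρ0 hρ1
    have hgr := T.graph_aux hi ht' hwseg
      (by show t'.1 = a.1 + ρ * (b.1 - a.1); rw [hxt]; linarith)
    have hgr' : t'.2 = a.2 + ρ * (b.2 - a.2) := hgr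
    have hρ2 : ρ * (b.1 - a.1) = b.1 + t * (p.1 - b.1) - a.1 := by rw [hρid, hz1]
    have hρ3 : ρ * (b.1 - a.1) * (b.2 - a.2) = (b.1 + t * (p.1 - b.1) - a.1) * (b.2 - a.2) := by
      rw [hρ2]
    rw [hgr', hz2]
    nlinarith [mul_nonneg ht0 hC, hρ3, hd]
  · rcases eq_or_lt_of_le hx with hpg | hpg
    · exfalso
      have hzp : p.1 ≤ z.1 := by
        nlinarith [mul_nonneg (by linarith : (0:ℝ) ≤ 1 - t) (by linarith : (0:ℝ) ≤ b.1 - p.1)]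
      rw [hpg] at hzp
      linarith
    · set r := (g.1 - z.1) / (g.1 - p.1) with hrdef
      have hzp : p.1 ≤ z.1 := by
        nlinarith [mul_nonneg (by linarith : (0:ℝ) ≤ 1 - t) (by linarith : (0:ℝ) ≤ b.1 - p.1)]
      have hr0 : 0 ≤ r := div_nonneg (by linarith) (by linarith)
      have hr1 : r ≤ 1 := (div_le_one (by linarith)).2 (by linarith)
      have hrid : r * (p.1 - g.1) = z.1 - g.1 := by
        have h := div_mul_cancel₀ (g.1 - z.1) (by intro h; rw [sub_eq_zero] at h; linarith :
          g.1 - p.1 ≠ 0)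
        rw [hrdef]
        linear_combination -h
      have hyseg : ((g.1 + r * (p.1 - g.1), g.2 + r * (p.2 - g.2)) : ℝ × ℝ) ∈ segment ℝ g p :=
        seg_mk hr0 hr1
      have h5 := hsee _ hyseg t' ht' (by show t'.1 = g.1 + r * (p.1 - g.1); rw [hxt]; linarith)
      have h5' : t'.2 ≤ g.2 + r * (p.2 - g.2) := h5
      have hkey : (z.1 - g.1) * (p.2 - g.2) - (z.2 - g.2) * (p.1 - g.1)
          = (1 - t) * (1 - u) * ((b.1 - a.1) * (p.2 - a.2) - (p.1 - a.1) * (b.2 - a.2)) := by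
        rw [hz1, hz2, hg1, hg2]; ring
      have hr2 : r * (g.1 - p.1) * (p.2 - g.2) = (g.1 - z.1) * (p.2 - g.2) := by
        linear_combination (-(p.2 - g.2)) * hrid
      have h6 : g.2 + r * (p.2 - g.2) ≤ z.2 := by
        nlinarith [hkey, hr2,
          mul_nonneg (mul_nonneg (by linarith : (0:ℝ) ≤ 1 - t) (by linarith : (0:ℝ) ≤ 1 - u)) hC,
          (by linarith : (0:ℝ) < g.1 - p.1)]
      linarith

/-- For `g` in the interior of edge `e_i`, every point `p ∈ T` with
`x(p) ≥ x(g)` seen by `g` is also seen by the left endpoint `v_i`, and every point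
`p ∈ T` with `x(p) ≤ x(g)` seen by `g` is also seen by the right endpoint `v_{i+1}`. -/
theorem edge_interior_guard_dominated_by_endpoints (T : Terrain) (i : ℕ)
    (hi : i + 1 < T.n) (g : ℝ × ℝ) (hg : g ∈ T.intEdge i) :
    (∀ p ∈ T.carrier, g.1 ≤ p.1 → T.sees g p → T.sees (T.v i) p) ∧
    (∀ p ∈ T.carrier, p.1 ≤ g.1 → T.sees g p → T.sees (T.v (i + 1)) p) := by
  exact ⟨fun p _ hx hs => key_left T hi hg hx hs,
         fun p _ hx hs => key_right T hi hg hx hs⟩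
end
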